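/- (Embedding part of the main theorem on equations for the generalised Humbert locus.) Let g, k be integers with 0 < k and 2k ≤ g, and let d₁, …, d_k be positive integers with d_i dividing d_{i+1} for i = 1, …, k−1. Let Z = (z_{ij}) ∈ ℍ_g satisfy the linear equations z_{ij} = d_i · z_{(g+1−i) j} for all 1 ≤ i, j ≤ k, and z_{ij} = 0 for all k+1 ≤ i ≤ g−k and 1 ≤ j ≤ k. Let Z_M = (z_{ij})_{1 ≤ i,j ≤ k} be the upper-left k×k block of Z, let Λ_M ⊆ ℂ^k be the subgroup generated over ℤ by the k columns of Z_M together with the vectors d_j e_j (j = 1, …, k), and define the ℂ-linear map ι : ℂ^k → ℂ^g by ι(x)_i = x_i and ι(x)_{g+1−i} = x_i / d_i for 1 ≤ i ≤ k, and all other coordinates of ι(x) equal to 0. Then ι is injective, and for every x ∈ ℂ^k one has ι(x) ∈ Λ_Z if and only if x ∈ Λ_M (in particular ι(Λ_M) ⊆ Λ_Z, so ι induces an injective homomorphism ℂ^k/Λ_M → ℂ^g/Λ_Z of complex tori). -/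

import Mathlib

open Finset Matrix

/-- Sum over `Fin g` of a function vanishing at indices `≥ k` equals the sum over `Fin k`. -/
lemma humbert_sum_restrict {M : Type*} [AddCommMonoid M] {g k : ℕ} (hkg : k ≤ g)
    (f : Fin g → M) (hf : ∀ j : Fin g, k ≤ (j : ℕ) → f j = 0) :
    ∑ j, f j = ∑ j : Fin k, f (Fin.castLE hkg j) := by
  classical
  have h2 : ∑ j : Fin k, f (Fin.castLE hkg j)
      = ∑ j ∈ Finset.univ.map (Fin.castLEEmb hkg), f j := by
    rw [Finset.sum_map]; rfl
  rw [h2]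
  refine (Finset.sum_subset (Finset.subset_univ _) ?_).symm
  intro x _ hx
  apply hf
  by_contra h
  push_neg at h
  exact hx (Finset.mem_map.mpr ⟨⟨(x : ℕ), h⟩, Finset.mem_univ _, Fin.ext rfl⟩)

lemma humbert_mem_span_union_iff {R M : Type*} [Semiring R] [AddCommMonoid M]
    [Module R M]
    {n m : Type*} [Fintype n] [Fintype m] (f : n → M) (h : m → M) (x : M) :
    x ∈ Submodule.span R (Set.range f ∪ Set.range h) ↔
      ∃ c : n → R, ∃ e : m → R, ∑ j, c j • f j + ∑ j, e j • h j = x := by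
  rw [Submodule.span_union, Submodule.mem_sup]
  constructor
  · rintro ⟨y, hy, z, hz, rfl⟩
    obtain ⟨c, rfl⟩ := (Submodule.mem_span_range_iff_exists_fun R).mp hy
    obtain ⟨e, rfl⟩ := (Submodule.mem_span_range_iff_exists_fun R).mp hz
    exact ⟨c, e, rfl⟩
  · rintro ⟨c, e, rfl⟩
    exact ⟨_, (Submodule.mem_span_range_iff_exists_fun R).mpr ⟨c, rfl⟩, _,
      (Submodule.mem_span_range_iff_exists_fun R).mpr ⟨e, rfl⟩, rfl⟩

theorem humbert_equations_embedding
    (g k : ℕ) (hk : 0 < k) (hkg : 2 * k ≤ g)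
    (d : ℕ → ℕ) (hd : ∀ i < k, 0 < d i)
    (hdvd : ∀ i, i + 1 < k → d i ∣ d (i + 1))
    (Z : Matrix (Fin g) (Fin g) ℂ)
    (hZsymm : Z.IsSymm) (hZpos : (Z.map Complex.im).PosDef)
    (heq1 : ∀ i j : Fin g, (i : ℕ) < k → (j : ℕ) < k →
      Z i j = (d i : ℂ) * Z ⟨g - 1 - (i : ℕ), by omega⟩ j)
    (heq2 : ∀ i j : Fin g, k ≤ (i : ℕ) → (i : ℕ) < g - k → (j : ℕ) < k →
      Z i j = 0) :
    Function.Injective (fun x : Fin k → ℂ => (fun r : Fin g =>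
      if hr : (r : ℕ) < k then x ⟨r, hr⟩
      else if hr2 : g - 1 - (r : ℕ) < k then
        x ⟨g - 1 - (r : ℕ), hr2⟩ / (d (g - 1 - (r : ℕ)) : ℂ)
      else 0)) ∧
    ∀ x : Fin k → ℂ,
      ((fun r : Fin g =>
        if hr : (r : ℕ) < k then x ⟨r, hr⟩
        else if hr2 : g - 1 - (r : ℕ) < k then
          x ⟨g - 1 - (r : ℕ), hr2⟩ / (d (g - 1 - (r : ℕ)) : ℂ)
        else 0) ∈
        Submodule.span ℤ
          (Set.range (fun j : Fin g => fun r : Fin g => Z r j) ∪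
           Set.range (fun j : Fin g => (Pi.single j 1 : Fin g → ℂ))))
      ↔ x ∈ Submodule.span ℤ
          (Set.range (fun j : Fin k => fun i : Fin k =>
            Z (Fin.castLE (by omega) i) (Fin.castLE (by omega) j)) ∪
           Set.range (fun j : Fin k => (Pi.single j (d j : ℂ) : Fin k → ℂ))) := by
  classical
  have hk1 : k ≤ g := by omega
  set F : (Fin k → ℂ) → (Fin g → ℂ) := fun x => (fun r : Fin g =>
      if hr : (r : ℕ) < k then x ⟨r, hr⟩
      else if hr2 : g - 1 - (r : ℕ) < k then
        x ⟨g - 1 - (r : ℕ), hr2⟩ / (d (g - 1 - (r : ℕ)) : ℂ)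
      else 0) with hF
  have hmk : ∀ (r : Fin g) (p : g - 1 - (r : ℕ) < g),
      (⟨g - 1 - (r : ℕ), p⟩ : Fin g) = Fin.rev r := by
    intro r p
    have := r.is_lt
    apply Fin.ext
    rw [Fin.val_rev]
    show g - 1 - (r : ℕ) = g - ((r : ℕ) + 1)
    omega
  have hZ1 : ∀ i j : Fin g, (i : ℕ) < k → (j : ℕ) < k →
      Z i j = (d i : ℂ) * Z (Fin.rev i) j := by
    intro i j hi hj
    have h := heq1 i j hi hj
    rwa [hmk] at h
  have hdC : ∀ i : ℕ, i < k → ((d i : ℂ) ≠ 0) := fun i hi =>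
    Nat.cast_ne_zero.mpr (hd i hi).ne'
  have hdR : ∀ i : ℕ, i < k → ((d i : ℝ) ≠ 0) := fun i hi =>
    Nat.cast_ne_zero.mpr (hd i hi).ne'
  have hF1 : ∀ (x : Fin k → ℂ) (i : Fin k), F x (Fin.castLE hk1 i) = x i := by
    intro x i
    simp only [hF]
    rw [dif_pos (show ((Fin.castLE hk1 i : Fin g) : ℕ) < k from i.is_lt)]
    exact congrArg x (Fin.ext rfl)
  have hF2 : ∀ (x : Fin k → ℂ) (r : Fin g) (h2 : g - 1 - (r : ℕ) < k), k ≤ (r : ℕ) →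
      F x r = x ⟨g - 1 - (r : ℕ), h2⟩ / (d (g - 1 - (r : ℕ)) : ℂ) := by
    intro x r h2 h1
    simp only [hF]
    rw [dif_neg (by omega), dif_pos h2]
  have hF3 : ∀ (x : Fin k → ℂ) (r : Fin g), k ≤ (r : ℕ) → (r : ℕ) < g - k → F x r = 0 := by
    intro x r h1 h2
    have := r.is_lt
    simp only [hF]
    rw [dif_neg (by omega), dif_neg (by omega)]
  constructor
  · -- injectivity
    intro x y hxy
    funext i
    have h := congrFun hxy (Fin.castLE hk1 i)
    rwa [hF1, hF1] at h
  intro x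
  rw [humbert_mem_span_union_iff, humbert_mem_span_union_iff]
  set Y : Matrix (Fin g) (Fin g) ℝ := Z.map Complex.im with hYdef
  have hYe : ∀ i j : Fin g, Y i j = (Z i j).im := fun i j => rfl
  have hYsym : ∀ i j : Fin g, Y i j = Y j i := by
    intro i j; rw [hYe, hYe, ← hZsymm.apply i j]
  have hY1 : ∀ i j : Fin g, (i : ℕ) < k → (j : ℕ) < k →
      Y i j = (d i : ℝ) * Y (Fin.rev i) j := by
    intro i j hi hj
    rw [hYe, hYe, hZ1 i j hi hj]
    simp [Complex.mul_im]
  have hY2 : ∀ i j : Fin g, k ≤ (i : ℕ) → (i : ℕ) < g - k → (j : ℕ) < k → Y i j = 0 := by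
    intro i j h1 h2 h3
    rw [hYe, heq2 i j h1 h2 h3, Complex.zero_im]
  constructor
  · -- forward direction
    rintro ⟨a, b, hab⟩
    have E : ∀ r : Fin g, ∑ j, (a j : ℂ) * Z r j + (b r : ℂ) = F x r := by
      intro r
      have h := congrFun hab r
      simp only [Finset.sum_apply, Pi.add_apply, Pi.smul_apply] at h
      simp only [zsmul_eq_mul] at h
      have hb : ∑ c : Fin g, ((b c : ℂ)) * (Pi.single c (1 : ℂ) : Fin g → ℂ) r = (b r : ℂ) := by
        rw [Finset.sum_eq_single r]
        · simp
        · intro c _ hc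
          simp [Pi.single_apply, Ne.symm hc]
        · intro hc; exact absurd (Finset.mem_univ r) hc
      rw [hb] at h
      simp only [hF]
      exact h
    have Fim : ∀ r : Fin g, ∑ j, (a j : ℝ) * Y r j = (F x r).im := by
      intro r
      have h := congrArg Complex.im (E r)
      simpa [Complex.im_sum, Complex.add_im, Complex.mul_im, hYe] using h
    set A2 := (fun j : Fin g => if (j : ℕ) < k then (0 : ℝ) else (a j : ℝ)) with hA2
    set w := (fun r : Fin g => ∑ j, A2 j * Y r j) with hwdef
    have hw : ∀ r : Fin g,
        w r = (F x r).im - ∑ j : Fin g, (if ((j : Fin g) : ℕ) < k then (a j : ℝ) else 0) * Y r j := by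
      intro r
      rw [← Fim r]
      simp only [hwdef]
      rw [← Finset.sum_sub_distrib]
      apply Finset.sum_congr rfl
      intro j _
      by_cases hj : (j : ℕ) < k <;> simp [hA2, hj]
    have hwmid : ∀ r : Fin g, k ≤ (r : ℕ) → (r : ℕ) < g - k → w r = 0 := by
      intro r h1 h2
      rw [hw r, hF3 x r h1 h2]
      simp only [Complex.zero_im, zero_sub, neg_eq_zero]
      apply Finset.sum_eq_zero
      intro j _
      by_cases hj : (j : ℕ) < k
      · rw [hY2 r j h1 h2 hj, mul_zero]
      · simp [hj]
    have hSrev : ∀ i : Fin g, (i : ℕ) < k →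
        (d (i : ℕ) : ℝ) * ∑ j : Fin g, (if ((j : Fin g) : ℕ) < k then (a j : ℝ) else 0) * Y (Fin.rev i) j
          = ∑ j : Fin g, (if ((j : Fin g) : ℕ) < k then (a j : ℝ) else 0) * Y i j := by
      intro i hi
      rw [Finset.mul_sum]
      apply Finset.sum_congr rfl
      intro j _
      by_cases hj : (j : ℕ) < k
      · rw [if_pos hj, ← mul_assoc, mul_comm ((d (i : ℕ) : ℝ)) _, mul_assoc,
          ← hY1 i j hi hj]
      · simp [hj]
    have hwrev : ∀ i : Fin g, (i : ℕ) < k →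
        (d (i : ℕ) : ℝ) * w (Fin.rev i) = w i := by
      intro i hi
      have hgi : g - 1 - ((Fin.rev i : Fin g) : ℕ) = (i : ℕ) := by
        have := i.is_lt; rw [Fin.val_rev]; omega
      have hkrev : k ≤ ((Fin.rev i : Fin g) : ℕ) := by
        have := i.is_lt; rw [Fin.val_rev]; omega
      have hFe : F x (Fin.rev i) = x ⟨(i : ℕ), hi⟩ / ((d (i : ℕ) : ℝ) : ℂ) := by
        rw [hF2 x (Fin.rev i) (by rw [hgi]; exact hi) hkrev]
        rw [show (⟨g - 1 - ((Fin.rev i : Fin g) : ℕ), by rw [hgi]; exact hi⟩ : Fin k)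
          = ⟨(i : ℕ), hi⟩ from Fin.ext hgi, hgi]
        norm_num
      have hFi : F x i = x ⟨(i : ℕ), hi⟩ := by
        simp only [hF]; rw [dif_pos hi]
      rw [hw, hw, hFe, hFi, Complex.div_ofReal_im, mul_sub, hSrev i hi,
        mul_div_cancel₀ _ (hdR _ hi)]
    set p := (fun j : Fin g =>
      if hj : (j : ℕ) < k then A2 (Fin.rev j) / (d (j : ℕ) : ℝ) else 0) with hp
    have hA2low : ∀ j : Fin g, (j : ℕ) < k → A2 j = 0 := by
      intro j hj; simp [hA2, hj]
    have hYp : ∀ r : Fin g, (r : ℕ) < k → ∑ j, Y r j * p j = w r := by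
      intro r hr
      have step1 : ∑ j, Y r j * p j = ∑ j : Fin g, Y r (Fin.rev j) * A2 (Fin.rev j) := by
        apply Finset.sum_congr rfl
        intro j _
        by_cases hj : (j : ℕ) < k
        · have hYrj : Y r (Fin.rev j) = Y r j / (d (j : ℕ) : ℝ) := by
            rw [hYsym r (Fin.rev j), eq_div_iff (hdR _ hj), mul_comm, hYsym r j]
            exact (hY1 j r hj hr).symm
          simp only [hp,
            dif_pos hj]
          rw [hYrj]
          ring
        · simp only [hp,
            dif_neg hj]
          rw [mul_zero]
          by_cases hj2 : ((Fin.rev j : Fin g) : ℕ) < k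
          · rw [hA2low _ hj2, mul_zero]
          · have hj3 : k ≤ ((Fin.rev j : Fin g) : ℕ) := le_of_not_gt hj2
            have hj4 : ((Fin.rev j : Fin g) : ℕ) < g - k := by
              have := j.is_lt; rw [Fin.val_rev] at hj3 ⊢; omega
            rw [hYsym r (Fin.rev j), hY2 _ _ hj3 hj4 hr, zero_mul]
      have hre : ∑ j : Fin g, Y r (Fin.rev j) * A2 (Fin.rev j)
          = ∑ j : Fin g, Y r j * A2 j :=
        Fintype.sum_equiv Fin.revPerm _ _ (fun j => rfl)
      rw [step1, hre]
      simp only [hwdef]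
      apply Finset.sum_congr rfl
      intro j _
      ring
    have hYu : ∀ r : Fin g, ∑ j, Y r j * (A2 j - p j) = 0 := by
      intro r
      have split : ∑ j, Y r j * (A2 j - p j)
          = (∑ j, Y r j * A2 j) - ∑ j, Y r j * p j := by
        rw [← Finset.sum_sub_distrib]
        exact Finset.sum_congr rfl fun j _ => by ring
      have hwr : ∑ j, Y r j * A2 j = w r := by
        simp only [hwdef]; exact Finset.sum_congr rfl fun j _ => by ring
      rw [split, hwr]
      rcases lt_or_ge ((r : ℕ)) k with hr | hr
      · rw [hYp r hr, sub_self]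
      rcases lt_or_ge ((r : ℕ)) (g - k) with hr2 | hr2
      · rw [hwmid r hr hr2, zero_sub, neg_eq_zero]
        apply Finset.sum_eq_zero
        intro j _
        by_cases hj : (j : ℕ) < k
        · rw [hY2 r j hr hr2 hj, zero_mul]
        · simp only [hp, dif_neg hj]; rw [mul_zero]
      · have hik : ((Fin.rev r : Fin g) : ℕ) < k := by
          have := r.is_lt; rw [Fin.val_rev]; omega
        have hri : Fin.rev (Fin.rev r) = r := Fin.rev_rev r
        have h1 : ∑ j, Y r j * p j
            = (∑ j, Y (Fin.rev r) j * p j) / (d ((Fin.rev r : Fin g) : ℕ) : ℝ) := by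
          rw [Finset.sum_div]
          apply Finset.sum_congr rfl
          intro j _
          by_cases hj : (j : ℕ) < k
          · have hYrj : Y r j = Y (Fin.rev r) j / (d ((Fin.rev r : Fin g) : ℕ) : ℝ) := by
              rw [eq_div_iff (hdR _ hik), mul_comm]
              have h := hY1 (Fin.rev r) j hik hj
              rw [hri] at h
              exact h.symm
            rw [hYrj]; ring
          · simp only [hp, dif_neg hj]
            rw [mul_zero, mul_zero, zero_div]
        rw [h1, hYp (Fin.rev r) hik]
        have h2 := hwrev (Fin.rev r) hik
        rw [hri] at h2
        rw [← h2, mul_div_cancel_left₀ _ (hdR _ hik), sub_self]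
    have hu : (fun j : Fin g => A2 j - p j) = 0 := by
      by_contra hne
      have hpos := hZpos.dotProduct_mulVec_pos hne
      have hzero : (Z.map Complex.im) *ᵥ (fun j : Fin g => A2 j - p j) = 0 := by
        funext r
        simpa [Matrix.mulVec, dotProduct, hYdef] using hYu r
      rw [hzero] at hpos
      simp [dotProduct] at hpos
    have ha0 : ∀ j : Fin g, k ≤ (j : ℕ) → a j = 0 := by
      intro j hj
      have h := congrFun hu j
      simp only [hp] at h
      simp only [hA2, if_neg (not_lt.mpr hj), dif_neg (not_lt.mpr hj), sub_zero,
        Pi.zero_apply] at h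
      exact_mod_cast h
    have key : ∀ i : Fin k,
        ∑ j : Fin k, (a (Fin.castLE hk1 j) : ℂ)
            * Z (Fin.castLE hk1 i) (Fin.castLE hk1 j)
          + (d (i : ℕ) : ℂ) * (b (Fin.rev (Fin.castLE hk1 i)) : ℂ) = x i := by
      intro i
      set r : Fin g := Fin.rev (Fin.castLE hk1 i) with hr
      have hgi : g - 1 - ((r : Fin g) : ℕ) = (i : ℕ) := by
        have := i.is_lt; rw [hr, Fin.val_rev]; simp only [Fin.coe_castLE]; omega
      have hkr : k ≤ ((r : Fin g) : ℕ) := by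
        have := i.is_lt; rw [hr, Fin.val_rev]; simp only [Fin.coe_castLE]; omega
      have hE := E r
      have hFr : F x r = x i / (d (i : ℕ) : ℂ) := by
        rw [hF2 x r (by rw [hgi]; exact i.is_lt) hkr]
        rw [show (⟨g - 1 - ((r : Fin g) : ℕ), by rw [hgi]; exact i.is_lt⟩ : Fin k) = i from
          Fin.ext hgi, hgi]
      have hsum : ∑ j, (a j : ℂ) * Z r j
          = (∑ j : Fin k, (a (Fin.castLE hk1 j) : ℂ)
              * Z (Fin.castLE hk1 i) (Fin.castLE hk1 j)) / (d (i : ℕ) : ℂ) := by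
        rw [humbert_sum_restrict hk1 (fun j => (a j : ℂ) * Z r j)
          (fun j hj => by have h0 := ha0 j hj; simp [h0]), Finset.sum_div]
        apply Finset.sum_congr rfl
        intro j _
        have hz := hZ1 (Fin.castLE hk1 i) (Fin.castLE hk1 j) i.is_lt j.is_lt
        rw [← hr] at hz
        rw [eq_div_iff (hdC _ i.is_lt)]
        rw [show ((Fin.castLE hk1 i : Fin g) : ℕ) = (i : ℕ) from rfl] at hz
        rw [hz]; ring
      rw [hsum, hFr] at hE
      have hE2 := congrArg (fun z => (d (i : ℕ) : ℂ) * z) hE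
      simp only [mul_add] at hE2
      rw [mul_div_cancel₀ _ (hdC _ i.is_lt), mul_div_cancel₀ _ (hdC _ i.is_lt)] at hE2
      exact hE2
    refine ⟨fun j => a (Fin.castLE hk1 j), fun j => b (Fin.rev (Fin.castLE hk1 j)), ?_⟩
    funext i
    simp only [Finset.sum_apply, Pi.add_apply, Pi.smul_apply]
    simp only [zsmul_eq_mul, Pi.single_apply]
    rw [show (∑ j : Fin k, (b (Fin.rev (Fin.castLE hk1 j)) : ℂ)
        * (if i = j then (d (j : ℕ) : ℂ) else 0))
        = (b (Fin.rev (Fin.castLE hk1 i)) : ℂ) * (d (i : ℕ) : ℂ) from by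
      rw [Finset.sum_eq_single i]
      · rw [if_pos rfl]
      · intro j _ hj; rw [if_neg (fun h => hj h.symm), mul_zero]
      · intro h; exact absurd (Finset.mem_univ i) h]
    rw [← key i]
    ring
  · -- easy direction
    rintro ⟨c, e, hce⟩
    have hx : ∀ i : Fin k,
        ∑ j : Fin k, (c j : ℂ) * Z (Fin.castLE hk1 i) (Fin.castLE hk1 j)
          + (e i : ℂ) * (d (i : ℕ) : ℂ) = x i := by
      intro i
      have h := congrFun hce i
      simp only [Finset.sum_apply, Pi.add_apply, Pi.smul_apply] at h
      simp only [zsmul_eq_mul, Pi.single_apply] at h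
      rw [← h]
      congr 1
      rw [Finset.sum_eq_single i]
      · rw [if_pos rfl]
      · intro j _ hj; rw [if_neg (fun h' => hj h'.symm), mul_zero]
      · intro h'; exact absurd (Finset.mem_univ i) h'
    refine ⟨fun j => if hj : (j : ℕ) < k then c ⟨(j : ℕ), hj⟩ else 0,
      fun r => if hr : (r : ℕ) < k then (d (r : ℕ) : ℤ) * e ⟨(r : ℕ), hr⟩
        else if hr2 : g - 1 - (r : ℕ) < k then e ⟨g - 1 - (r : ℕ), hr2⟩ else 0, ?_⟩
    funext r
    simp only [Finset.sum_apply, Pi.add_apply, Pi.smul_apply]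
    simp only [zsmul_eq_mul, Pi.single_apply]
    rw [show (∑ j : Fin g, ((if hr : ((j : Fin g) : ℕ) < k then
          (d ((j : Fin g) : ℕ) : ℤ) * e ⟨((j : Fin g) : ℕ), hr⟩
        else if hr2 : g - 1 - ((j : Fin g) : ℕ) < k then e ⟨g - 1 - ((j : Fin g) : ℕ), hr2⟩
        else 0 : ℤ) : ℂ) * (if r = j then (1 : ℂ) else 0))
        = ((if hr : (r : ℕ) < k then (d (r : ℕ) : ℤ) * e ⟨(r : ℕ), hr⟩
        else if hr2 : g - 1 - (r : ℕ) < k then e ⟨g - 1 - (r : ℕ), hr2⟩ else 0 : ℤ) : ℂ)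
        from by
      rw [Finset.sum_eq_single r]
      · rw [if_pos rfl, mul_one]
      · intro j _ hj; rw [if_neg (fun h' => hj h'.symm), mul_zero]
      · intro h'; exact absurd (Finset.mem_univ r) h']
    have hsum : ∑ j : Fin g,
        ((if hj : ((j : Fin g) : ℕ) < k then c ⟨((j : Fin g) : ℕ), hj⟩ else 0 : ℤ) : ℂ)
          * Z r j
        = ∑ j : Fin k, (c j : ℂ) * Z r (Fin.castLE hk1 j) := by
      rw [humbert_sum_restrict hk1 _ (fun j hj => by
        have h0 : ¬ ((j : Fin g) : ℕ) < k := not_lt.mpr hj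
        simp [h0])]
      apply Finset.sum_congr rfl
      intro j _
      rw [dif_pos (show ((Fin.castLE hk1 j : Fin g) : ℕ) < k from j.is_lt)]
      rfl
    rw [hsum]
    change _ = F x r
    rcases lt_or_ge ((r : ℕ)) k with hr | hr
    · -- r < k
      rw [dif_pos hr]
      have hre : r = Fin.castLE hk1 ⟨(r : ℕ), hr⟩ := Fin.ext rfl
      have hFr : F x r = x ⟨(r : ℕ), hr⟩ := by simp only [hF]; rw [dif_pos hr]
      rw [hFr, ← hx ⟨(r : ℕ), hr⟩]
      rw [show ((((d (r : ℕ) : ℤ) * e ⟨(r : ℕ), hr⟩ : ℤ)) : ℂ)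
        = (e ⟨(r : ℕ), hr⟩ : ℂ) * (d (r : ℕ) : ℂ) from by push_cast; ring]
      congr 1
    rcases lt_or_ge ((r : ℕ)) (g - k) with hr2 | hr2
    · -- middle
      rw [dif_neg (not_lt.mpr hr), dif_neg (by omega), hF3 x r hr hr2]
      rw [Finset.sum_eq_zero fun j _ => by
        rw [heq2 r (Fin.castLE hk1 j) hr hr2 j.is_lt, mul_zero]]
      simp
    · -- r ≥ g - k
      have := r.is_lt
      have hgk : g - 1 - (r : ℕ) < k := by omega
      set i : Fin k := ⟨g - 1 - (r : ℕ), hgk⟩ with hi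
      have hri : Fin.rev (Fin.castLE hk1 i) = r := by
        apply Fin.ext
        rw [Fin.val_rev]
        simp only [Fin.coe_castLE, hi]
        omega
      rw [dif_neg (not_lt.mpr hr), dif_pos hgk]
      have hFr : F x r = x i / (d ((i : Fin k) : ℕ) : ℂ) := hF2 x r hgk hr
      rw [hFr]
      have hzsum : ∑ j : Fin k, (c j : ℂ) * Z r (Fin.castLE hk1 j)
          = (∑ j : Fin k, (c j : ℂ) * Z (Fin.castLE hk1 i) (Fin.castLE hk1 j))
            / (d ((i : Fin k) : ℕ) : ℂ) := by
        rw [Finset.sum_div]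
        apply Finset.sum_congr rfl
        intro j _
        have hz := hZ1 (Fin.castLE hk1 i) (Fin.castLE hk1 j) i.is_lt j.is_lt
        rw [hri] at hz
        rw [eq_div_iff (hdC _ i.is_lt)]
        rw [show ((Fin.castLE hk1 i : Fin g) : ℕ) = ((i : Fin k) : ℕ) from rfl] at hz
        rw [hz]; ring
      rw [hzsum, ← hx i, add_div, mul_div_cancel_right₀ _ (hdC _ i.is_lt)]
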